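/- In the shot-noise Cox process setup with factorized intensity ν(dθ, dγ) = G₀(dθ) ρ(dγ), where G₀ is a probability measure on X and ρ(dγ) = τ γ^{−1} e^{−cγ} dγ on (0,∞) is the Lévy intensity of the gamma process with parameters τ, c > 0, assume: (a) for every k ≥ 0, almost surely P(Φ(X) = k | Λ) = e^{−Λ(γ̂)} Λ(γ̂)^k / k!, where γ̂(θ, γ) = γ; and (b) Λ satisfies the Poisson exponential-moment formula with intensity ν. Then the total number of points Φ(X) has the negative binomial distribution with parameters (τ, c/(c+1)): for every k ≥ 0, P(Φ(X) = k) = (Γ(τ + k) / (k! Γ(τ))) · (c/(c+1))^τ · (c+1)^{−k}. -/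

import Mathlib

open MeasureTheory

/-- `expNeg t = e^{-t}` for `t ∈ [0,∞]`, with `expNeg ∞ = 0`. -/
noncomputable def expNeg (t : ENNReal) : ENNReal :=
  if t = ⊤ then 0 else ENNReal.ofReal (Real.exp (-t.toReal))

/-- A random measure `Λ` satisfies the Poisson exponential-moment formula with
intensity `ν`. -/
def PoissonExpMoment {Ω Y : Type*} [MeasurableSpace Ω] [MeasurableSpace Y]
    (P : Measure Ω) (Λ : Ω → Measure Y) (ν : Measure Y) : Prop :=
  ∀ (m : ℕ), 1 ≤ m → ∀ h : Y → ENNReal, Measurable h →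
    ∀ c : Fin m → Y → ENNReal, (∀ j, Measurable (c j)) →
    ∫⁻ ω, expNeg (∫⁻ z, h z ∂(Λ ω)) * ∏ j, ∫⁻ z, c j z ∂(Λ ω) ∂P
      = expNeg (∫⁻ z, (1 - expNeg (h z)) ∂ν)
        * ∑ pt : Finpartition (Finset.univ : Finset (Fin m)),
            ∏ J ∈ pt.parts, ∫⁻ z, expNeg (h z) * ∏ j ∈ J, c j z ∂ν

/-- The Lévy intensity `ρ(dγ) = τ γ⁻¹ e^{−cγ} dγ` of the gamma process on `(0,∞)`. -/
noncomputable def gammaLevyIntensity (τ c : ℝ) : Measure ℝ :=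
  (volume.restrict (Set.Ioi (0 : ℝ))).withDensity
    (fun γ => ENNReal.ofReal (τ * γ⁻¹ * Real.exp (-(c * γ))))


namespace SNCPAux
open Finset Real

variable {α : Type*} [DecidableEq α] {s : Finset α} {a : α}

lemma not_mem_of_parts (pt : Finpartition s) (ha : a ∉ s)
    {K : Finset α} (hK : K ∈ pt.parts) : a ∉ K := fun h => ha (pt.le hK h)

lemma singleton_not_mem (pt : Finpartition s) (ha : a ∉ s) :
    ({a} : Finset α) ∉ pt.parts := fun h =>
  not_mem_of_parts pt ha h (Finset.mem_singleton_self a)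

/-- Add `a` as a new singleton block. -/
def extNone (a : α) {s : Finset α} (ha : a ∉ s) (pt : Finpartition s) :
    Finpartition (insert a s) :=
  pt.extend (b := {a}) (by simp [Finset.bot_eq_empty])
    (Finset.disjoint_singleton_right.2 ha)
    (by rw [Finset.sup_eq_union, Finset.union_comm, ← Finset.insert_eq])

lemma extNone_parts (a : α) {s : Finset α} (ha : a ∉ s) (pt : Finpartition s) :
    (extNone a ha pt).parts = insert {a} pt.parts := rfl

/-- Add `a` to the block `J`. -/
def extSome (a : α) {s : Finset α} (ha : a ∉ s) (pt : Finpartition s) (J : Finset α)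
    (hJ : J ∈ pt.parts) : Finpartition (insert a s) where
  parts := insert (insert a J) (pt.parts.erase J)
  supIndep := by
    rw [Finset.supIndep_iff_pairwiseDisjoint, coe_insert]
    refine Set.PairwiseDisjoint.insert ?_ ?_
    · exact pt.disjoint.subset (by exact_mod_cast Finset.erase_subset _ _)
    · intro K hK hne
      rw [Finset.mem_coe, Finset.mem_erase] at hK
      have haK : a ∉ K := fun h => ha (pt.le hK.2 h)
      have hdJK : Disjoint J K := pt.disjoint hJ hK.2 (Ne.symm hK.1)
      simp only [id]
      rw [Finset.disjoint_insert_left]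
      exact ⟨haK, hdJK⟩
  sup_parts := by
    have h1 : J ⊔ (pt.parts.erase J).sup id = s := by
      have := Finset.sup_insert (b := J) (s := pt.parts.erase J) (f := id)
      rw [Finset.insert_erase hJ] at this
      simp only [id_eq] at this
      rw [← this, pt.sup_parts]
    rw [Finset.sup_insert]
    simp only [id] at h1 ⊢
    rw [Finset.sup_eq_union] at h1 ⊢
    rw [Finset.insert_union, h1]
  bot_notMem := by
    intro h
    rcases Finset.mem_insert.1 h with h | h
    · exact (Finset.insert_nonempty a J).ne_empty (by simpa [Finset.bot_eq_empty] using h.symm)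
    · exact pt.bot_notMem (Finset.mem_of_mem_erase h)

lemma extSome_parts (a : α) {s : Finset α} (ha : a ∉ s) (pt : Finpartition s) (J : Finset α)
    (hJ : J ∈ pt.parts) :
    (extSome a ha pt J hJ).parts = insert (insert a J) (pt.parts.erase J) := rfl

/-- Remove the singleton `{a}` from a partition of `insert a s`. -/
def delNone (a : α) {s : Finset α} (ha : a ∉ s) (Q : Finpartition (insert a s))
    (h : ({a} : Finset α) ∈ Q.parts) : Finpartition s where
  parts := Q.parts.erase {a}
  supIndep := Q.supIndep.subset (Finset.erase_subset _ _)
  sup_parts := by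
    have key : {a} ⊔ (Q.parts.erase {a}).sup id = insert a s := by
      have := Finset.sup_insert (b := ({a} : Finset α)) (s := Q.parts.erase {a}) (f := id)
      rw [Finset.insert_erase h] at this
      simp only [id_eq] at this
      rw [← this, Q.sup_parts]
    have hdisj : Disjoint (id ({a} : Finset α)) ((Q.parts.erase {a}).sup id) :=
      Q.supIndep (Finset.erase_subset _ _) h (Finset.notMem_erase _ _)
    have haE : a ∉ (Q.parts.erase {a}).sup id := by
      simpa using hdisj
    ext x
    constructor
    · intro hx
      have : x ∈ insert a s := by
        rw [← key]
        rw [Finset.sup_eq_union]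
        exact Finset.mem_union_right _ hx
      rcases Finset.mem_insert.1 this with rfl | h2
      · exact absurd hx haE
      · exact h2
    · intro hx
      have hxa : x ≠ a := fun h' => ha (h' ▸ hx)
      have : x ∈ ({a} : Finset α) ⊔ (Q.parts.erase {a}).sup id := by
        rw [key]; exact Finset.mem_insert_of_mem hx
      rw [Finset.sup_eq_union, Finset.mem_union] at this
      rcases this with h' | h'
      · exact absurd (Finset.mem_singleton.1 h') hxa
      · exact h'
  bot_notMem := fun h' => Q.bot_notMem (Finset.mem_of_mem_erase h')

lemma delNone_parts (a : α) {s : Finset α} (ha : a ∉ s) (Q : Finpartition (insert a s))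
    (h : ({a} : Finset α) ∈ Q.parts) : (delNone a ha Q h).parts = Q.parts.erase {a} := rfl

/-- Remove `a` from its (non-singleton) block `B`. -/
def delSome (a : α) {s : Finset α} (ha : a ∉ s) (Q : Finpartition (insert a s))
    (B : Finset α) (hB : B ∈ Q.parts) (haB : a ∈ B) (hne : B ≠ {a}) : Finpartition s where
  parts := insert (B.erase a) (Q.parts.erase B)
  supIndep := by
    rw [Finset.supIndep_iff_pairwiseDisjoint, coe_insert]
    refine Set.PairwiseDisjoint.insert ?_ ?_
    · exact Q.disjoint.subset (by exact_mod_cast Finset.erase_subset _ _)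
    · intro K hK hne'
      rw [Finset.mem_coe, Finset.mem_erase] at hK
      have : Disjoint B K := Q.disjoint hB hK.2 (Ne.symm hK.1)
      simp only [id]
      exact this.mono_left (Finset.erase_subset _ _)
  sup_parts := by
    have key : B ⊔ (Q.parts.erase B).sup id = insert a s := by
      have := Finset.sup_insert (b := B) (s := Q.parts.erase B) (f := id)
      rw [Finset.insert_erase hB] at this
      simp only [id_eq] at this
      rw [← this, Q.sup_parts]
    have hdisj : Disjoint (id B) ((Q.parts.erase B).sup id) :=
      Q.supIndep (Finset.erase_subset _ _) hB (Finset.notMem_erase _ _)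
    have haE : a ∉ (Q.parts.erase B).sup id := fun h => by
      exact (Finset.disjoint_left.1 hdisj) haB h
    rw [Finset.sup_insert]
    simp only [id] at key haE ⊢
    ext x
    rw [Finset.sup_eq_union, Finset.mem_union]
    constructor
    · rintro (hx | hx)
      · have hxa := Finset.ne_of_mem_erase hx
        have : x ∈ insert a s := by
          rw [← key, Finset.sup_eq_union, Finset.mem_union]
          exact Or.inl (Finset.mem_of_mem_erase hx)
        rcases Finset.mem_insert.1 this with rfl | h2
        · exact absurd rfl hxa
        · exact h2
      · have : x ∈ insert a s := by
          rw [← key, Finset.sup_eq_union, Finset.mem_union]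
          exact Or.inr hx
        rcases Finset.mem_insert.1 this with rfl | h2
        · exact absurd hx haE
        · exact h2
    · intro hx
      have hxa : x ≠ a := fun h' => ha (h' ▸ hx)
      have : x ∈ B ⊔ (Q.parts.erase B).sup id := by
        rw [key]; exact Finset.mem_insert_of_mem hx
      rw [Finset.sup_eq_union, Finset.mem_union] at this
      rcases this with h' | h'
      · exact Or.inl (Finset.mem_erase.2 ⟨hxa, h'⟩)
      · exact Or.inr h'
  bot_notMem := by
    intro h
    rcases Finset.mem_insert.1 h with h | h
    · have : B.erase a = ∅ := by simpa [Finset.bot_eq_empty] using h.symm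
      have hBne : (B.erase a).Nonempty := by
        by_contra hcon
        rw [Finset.not_nonempty_iff_eq_empty] at hcon
        apply hne
        apply Finset.eq_singleton_iff_unique_mem.2 ⟨haB, ?_⟩
        intro x hx
        by_contra hxa
        exact (Finset.eq_empty_iff_forall_notMem.1 hcon x) (Finset.mem_erase.2 ⟨hxa, hx⟩)
      exact hBne.ne_empty this
    · exact Q.bot_notMem (Finset.mem_of_mem_erase h)

lemma delSome_parts (a : α) {s : Finset α} (ha : a ∉ s) (Q : Finpartition (insert a s))
    (B : Finset α) (hB : B ∈ Q.parts) (haB : a ∈ B) (hne : B ≠ {a}) :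
    (delSome a ha Q B hB haB hne).parts = insert (B.erase a) (Q.parts.erase B) := rfl

/-- The pasting map. -/
noncomputable def pasting (a : α) {s : Finset α} (ha : a ∉ s) :
    (Σ pt : Finpartition s, Option {J // J ∈ pt.parts}) → Finpartition (insert a s)
  | ⟨pt, none⟩ => extNone a ha pt
  | ⟨pt, some J⟩ => extSome a ha pt J.1 J.2

lemma singleton_mem_pasting_none (ha : a ∉ s) (pt : Finpartition s) :
    ({a} : Finset α) ∈ (extNone a ha pt).parts := by
  rw [extNone_parts]; exact Finset.mem_insert_self _ _

lemma singleton_not_mem_pasting_some (ha : a ∉ s) (pt : Finpartition s)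
    (J : Finset α) (hJ : J ∈ pt.parts) :
    ({a} : Finset α) ∉ (extSome a ha pt J hJ).parts := by
  rw [extSome_parts]
  intro h
  rcases Finset.mem_insert.1 h with h | h
  · obtain ⟨b, hb⟩ := pt.nonempty_of_mem_parts hJ
    have hba : b ≠ a := fun h' => not_mem_of_parts pt ha hJ (h' ▸ hb)
    have : b ∈ ({a} : Finset α) := h ▸ Finset.mem_insert_of_mem hb
    exact hba (Finset.mem_singleton.1 this)
  · exact singleton_not_mem pt ha (Finset.mem_of_mem_erase h)

lemma insertJ_not_mem_erase (ha : a ∉ s) (pt : Finpartition s) (J K : Finset α) :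
    insert a J ∉ pt.parts.erase K := fun h =>
  not_mem_of_parts pt ha (Finset.mem_of_mem_erase h) (Finset.mem_insert_self a J)

lemma pasting_injective (ha : a ∉ s) : Function.Injective (pasting a ha) := by
  rintro ⟨pt, o⟩ ⟨pt', o'⟩ hEq
  match o, o' with
  | none, none =>
    have hparts : insert ({a} : Finset α) pt.parts = insert {a} pt'.parts := by
      have := congrArg Finpartition.parts hEq
      rwa [show (pasting a ha ⟨pt, none⟩) = extNone a ha pt from rfl,
        show (pasting a ha ⟨pt', none⟩) = extNone a ha pt' from rfl,
        extNone_parts, extNone_parts] at this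
    have h1 : pt.parts = pt'.parts := by
      have e1 := congrArg (fun t => Finset.erase t ({a} : Finset α)) hparts
      simpa [Finset.erase_insert (singleton_not_mem pt ha),
        Finset.erase_insert (singleton_not_mem pt' ha)] using e1
    obtain rfl : pt = pt' := Finpartition.ext h1
    rfl
  | none, some J =>
    exfalso
    have h1 : ({a} : Finset α) ∈ (pasting a ha ⟨pt', some J⟩).parts := by
      rw [← hEq]; exact singleton_mem_pasting_none ha pt
    exact singleton_not_mem_pasting_some ha pt' J.1 J.2 h1
  | some J, none =>
    exfalso
    have h1 : ({a} : Finset α) ∈ (pasting a ha ⟨pt, some J⟩).parts := by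
      rw [hEq]; exact singleton_mem_pasting_none ha pt'
    exact singleton_not_mem_pasting_some ha pt J.1 J.2 h1
  | some J, some J' =>
    have hQ : extSome a ha pt J.1 J.2 = extSome a ha pt' J'.1 J'.2 := hEq
    have hBB' : insert a J.1 = insert a J'.1 := by
      have h1 : (extSome a ha pt J.1 J.2).part a = insert a J.1 :=
        Finpartition.part_eq_of_mem _
          (by rw [extSome_parts]; exact Finset.mem_insert_self _ _)
          (Finset.mem_insert_self a J.1)
      have h2 : (extSome a ha pt' J'.1 J'.2).part a = insert a J'.1 :=
        Finpartition.part_eq_of_mem _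
          (by rw [extSome_parts]; exact Finset.mem_insert_self _ _)
          (Finset.mem_insert_self a J'.1)
      rw [← h1, ← h2, hQ]
    have haJ : a ∉ J.1 := not_mem_of_parts pt ha J.2
    have haJ' : a ∉ J'.1 := not_mem_of_parts pt' ha J'.2
    have hJJ' : J.1 = J'.1 := by
      have := congrArg (fun t => Finset.erase t a) hBB'
      simpa [Finset.erase_insert haJ, Finset.erase_insert haJ'] using this
    have hparts : insert (insert a J.1) (pt.parts.erase J.1)
        = insert (insert a J.1) (pt'.parts.erase J.1) := by
      have := congrArg Finpartition.parts hQ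
      rwa [extSome_parts, extSome_parts, ← hJJ'] at this
    have h2 : pt.parts.erase J.1 = pt'.parts.erase J.1 := by
      have e1 := congrArg (fun t => Finset.erase t (insert a J.1)) hparts
      simpa [Finset.erase_insert (insertJ_not_mem_erase ha pt J.1 J.1),
        Finset.erase_insert (insertJ_not_mem_erase ha pt' J.1 J.1)] using e1
    have h3 : pt.parts = pt'.parts := by
      rw [← Finset.insert_erase J.2, h2, Finset.insert_erase (hJJ' ▸ J'.2)]
    obtain rfl : pt = pt' := Finpartition.ext h3
    have : J = J' := Subtype.ext hJJ'
    rw [this]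

lemma pasting_surjective (ha : a ∉ s) : Function.Surjective (pasting a ha) := by
  intro Q
  have hmem : a ∈ insert a s := Finset.mem_insert_self a s
  by_cases hBa : Q.part a = {a}
  · refine ⟨⟨delNone a ha Q (hBa ▸ (Q.part_mem.2 hmem)), none⟩, ?_⟩
    apply Finpartition.ext
    rw [show pasting a ha ⟨delNone a ha Q (hBa ▸ (Q.part_mem.2 hmem)), none⟩
      = extNone a ha (delNone a ha Q (hBa ▸ (Q.part_mem.2 hmem))) from rfl,
      extNone_parts, delNone_parts]
    exact Finset.insert_erase (hBa ▸ (Q.part_mem.2 hmem))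
  · have hB : Q.part a ∈ Q.parts := (Q.part_mem.2 hmem)
    have haB : a ∈ Q.part a := Q.mem_part hmem
    have hJmem : (Q.part a).erase a ∈ (delSome a ha Q (Q.part a) hB haB hBa).parts := by
      rw [delSome_parts]; exact Finset.mem_insert_self _ _
    refine ⟨⟨delSome a ha Q (Q.part a) hB haB hBa, some ⟨(Q.part a).erase a, hJmem⟩⟩, ?_⟩
    apply Finpartition.ext
    have hpasting : pasting a ha ⟨delSome a ha Q (Q.part a) hB haB hBa,
        some ⟨(Q.part a).erase a, hJmem⟩⟩
        = extSome a ha (delSome a ha Q (Q.part a) hB haB hBa) ((Q.part a).erase a) hJmem := rfl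
    rw [hpasting, extSome_parts, delSome_parts]
    have h1 : insert a ((Q.part a).erase a) = Q.part a := Finset.insert_erase haB
    have h2 : (Q.part a).erase a ∉ Q.parts.erase (Q.part a) := by
      intro h
      have h3 : (Q.part a).erase a ∈ Q.parts := Finset.mem_of_mem_erase h
      have h4 : (Q.part a).erase a ≠ Q.part a := by
        intro h'
        have h6 := haB
        rw [← h'] at h6
        exact Finset.notMem_erase a (Q.part a) h6
      have h5 : Disjoint ((Q.part a).erase a) (Q.part a) := Q.disjoint h3 hB h4
      obtain ⟨b, hb⟩ := Q.nonempty_of_mem_parts h3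
      exact (Finset.disjoint_left.1 h5) hb (Finset.mem_of_mem_erase hb)
    rw [Finset.erase_insert h2, h1, Finset.insert_erase hB]

lemma sum_finpartition_insert {M : Type*} [AddCommMonoid M] (ha : a ∉ s)
    (g : Finpartition (insert a s) → M) :
    ∑ Q : Finpartition (insert a s), g Q
      = ∑ pt : Finpartition s, (g (extNone a ha pt)
          + ∑ J ∈ pt.parts.attach, g (extSome a ha pt J.1 J.2)) := by
  rw [← Fintype.sum_bijective (pasting a ha) ⟨pasting_injective ha, pasting_surjective ha⟩
    (fun x => g (pasting a ha x)) g (fun x => rfl)]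
  rw [← Finset.univ_sigma_univ, Finset.sum_sigma]
  refine Finset.sum_congr rfl fun pt _ => ?_
  rw [Fintype.sum_option (fun o => g (pasting a ha ⟨pt, o⟩))]
  rfl

/-- weight of a block of size `m` -/
noncomputable def blockWt (t : ENNReal) (J : Finset α) : ENNReal :=
  t * ((J.card - 1).factorial : ENNReal)

lemma prod_extNone (t : ENNReal) (ha : a ∉ s) (pt : Finpartition s) :
    ∏ J ∈ (extNone a ha pt).parts, blockWt t J
      = t * ∏ J ∈ pt.parts, blockWt t J := by
  rw [extNone_parts, Finset.prod_insert (singleton_not_mem pt ha)]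
  simp [blockWt]

lemma prod_extSome (t : ENNReal) (ha : a ∉ s) (pt : Finpartition s) (J : Finset α)
    (hJ : J ∈ pt.parts) :
    ∏ K ∈ (extSome a ha pt J hJ).parts, blockWt t K
      = (J.card : ENNReal) * ∏ K ∈ pt.parts, blockWt t K := by
  rw [extSome_parts, Finset.prod_insert (insertJ_not_mem_erase ha pt J J)]
  have haJ : a ∉ J := not_mem_of_parts pt ha hJ
  have hcard : (insert a J).card = J.card + 1 := Finset.card_insert_of_notMem haJ
  have hpos : 1 ≤ J.card := Finset.card_pos.2 (pt.nonempty_of_mem_parts hJ)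
  have hfac : (J.card + 1 - 1).factorial = J.card * (J.card - 1).factorial := by
    have : J.card = (J.card - 1) + 1 := (Nat.succ_pred_eq_of_pos hpos).symm
    rw [Nat.add_sub_cancel]
    conv_lhs => rw [this]
    rw [Nat.factorial_succ, ← this]
  have h1 : blockWt t (insert a J) = (J.card : ENNReal) * blockWt t J := by
    rw [blockWt, blockWt, hcard, hfac]
    push_cast
    ring
  rw [h1, mul_assoc, Finset.mul_prod_erase _ _ hJ]

lemma parts_of_empty (pt : Finpartition (∅ : Finset α)) : pt.parts = ∅ := by
  rw [Finset.eq_empty_iff_forall_notMem]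
  intro K hK
  have hK0 : K = ∅ := Finset.subset_empty.1 (pt.le hK)
  exact pt.bot_notMem (by simpa [Finset.bot_eq_empty, hK0] using hK)

lemma partition_sum (t : ENNReal) (s : Finset α) :
    ∑ pt : Finpartition s, ∏ J ∈ pt.parts, blockWt t J
      = ∏ i ∈ Finset.range s.card, (t + i) := by
  induction s using Finset.induction_on with
  | empty =>
      haveI : Unique (Finpartition (∅ : Finset α)) :=
        inferInstanceAs (Unique (Finpartition (⊥ : Finset α)))
      rw [Fintype.sum_unique]
      rw [parts_of_empty]
      simp
  | @insert a s ha ih =>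
      rw [sum_finpartition_insert ha]
      have key : ∀ pt : Finpartition s,
          (∏ J ∈ (extNone a ha pt).parts, blockWt t J)
            + ∑ J ∈ pt.parts.attach, ∏ K ∈ (extSome a ha pt J.1 J.2).parts, blockWt t K
          = (t + s.card) * ∏ J ∈ pt.parts, blockWt t J := by
        intro pt
        rw [prod_extNone]
        have h2 : ∀ J ∈ pt.parts.attach,
            ∏ K ∈ (extSome a ha pt J.1 J.2).parts, blockWt t K
              = (J.1.card : ENNReal) * ∏ K ∈ pt.parts, blockWt t K := fun J _ =>
          prod_extSome t ha pt J.1 J.2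
        rw [Finset.sum_congr rfl h2, ← Finset.sum_mul]
        have h3 : ∑ J ∈ pt.parts.attach, (J.1.card : ENNReal) = (s.card : ENNReal) := by
          rw [Finset.sum_attach pt.parts (fun J => (J.card : ENNReal))]
          rw [← Nat.cast_sum]
          rw [pt.sum_card_parts]
        rw [h3, ← add_mul]
      rw [Finset.sum_congr rfl (fun pt _ => key pt), ← Finset.mul_sum, ih,
        Finset.card_insert_of_notMem ha, Finset.prod_range_succ, mul_comm]

lemma expNeg_ofReal {x : ℝ} (hx : 0 ≤ x) :
    expNeg (ENNReal.ofReal x) = ENNReal.ofReal (Real.exp (-x)) := by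
  rw [expNeg, if_neg ENNReal.ofReal_ne_top, ENNReal.toReal_ofReal hx]

lemma measurable_expNeg : Measurable expNeg := by
  have h1 : Measurable fun t : ENNReal => ENNReal.ofReal (Real.exp (-t.toReal)) :=
    ENNReal.measurable_ofReal.comp
      (Real.continuous_exp.measurable.comp ENNReal.measurable_toReal.neg)
  have h2 : MeasurableSet {t : ENNReal | t = ⊤} := by
    rw [Set.setOf_eq_eq_singleton]; exact measurableSet_singleton _
  exact Measurable.ite h2 measurable_const h1

lemma one_sub_expNeg_ofReal {x : ℝ} (hx : 0 ≤ x) :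
    1 - expNeg (ENNReal.ofReal x) = ENNReal.ofReal (1 - Real.exp (-x)) := by
  rw [expNeg_ofReal hx, ← ENNReal.ofReal_one,
    ← ENNReal.ofReal_sub _ (Real.exp_nonneg _)]

lemma measurable_density (τ c : ℝ) :
    Measurable fun γ : ℝ => ENNReal.ofReal (τ * γ⁻¹ * Real.exp (-(c * γ))) :=
  ENNReal.measurable_ofReal.comp
    (((measurable_const.mul measurable_inv).mul
      (Real.continuous_exp.measurable.comp (measurable_const.mul measurable_id).neg)))

lemma integrableOn_pow_mul_exp (n : ℕ) {r : ℝ} (hr : 1 < r) :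
    IntegrableOn (fun x : ℝ => x ^ n * Real.exp (-(r * x))) (Set.Ioi (0:ℝ)) := by
  have hc : 0 < r - 1 := by linarith
  refine integrable_of_isBigO_exp_neg (one_pos) ?_ ?_
  · exact ((continuous_pow n).mul
      ((Real.continuous_exp.comp (continuous_const.mul continuous_id).neg))).continuousOn
  · have htend : Filter.Tendsto (fun x : ℝ => x ^ n * Real.exp (-((r-1) * x)))
        Filter.atTop (nhds 0) := by
      have h1 := (tendsto_pow_mul_exp_neg_atTop_nhds_zero n).comp
        (Filter.tendsto_id.const_mul_atTop hc)
      simp only [id_eq] at h1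
      have h2 : ((fun x : ℝ => x ^ n * Real.exp (-x)) ∘ fun x : ℝ => (r-1) * x)
          = fun x : ℝ => (r-1)^n * (x ^ n * Real.exp (-((r-1) * x))) := by
        funext x; simp [Function.comp, mul_pow]; ring
      rw [h2] at h1
      have h3 := h1.const_mul ((r-1)^n)⁻¹
      simp only [mul_zero] at h3
      convert h3 using 2 with x
      rw [← mul_assoc, inv_mul_cancel₀ (by positivity), one_mul]
    have hO : (fun x : ℝ => x ^ n * Real.exp (-(r * x)))
        =O[Filter.atTop] fun x : ℝ => Real.exp (-1 * x) := by
      have heq : (fun x : ℝ => x ^ n * Real.exp (-(r * x)))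
          = fun x : ℝ => (x ^ n * Real.exp (-((r-1) * x))) * Real.exp (-1 * x) := by
        funext x
        rw [mul_assoc, ← Real.exp_add]
        ring_nf
      rw [heq]
      have h4 := (htend.isBigO_one ℝ (l := Filter.atTop)).mul
        (Asymptotics.isBigO_refl (fun x : ℝ => Real.exp (-1 * x)) Filter.atTop)
      simpa using h4
    exact hO

lemma integral_pow_mul_exp (m : ℕ) (hm : 1 ≤ m) {r : ℝ} (hr : 0 < r) :
    ∫ x in Set.Ioi (0:ℝ), x ^ (m - 1) * Real.exp (-(r * x))
      = ((m-1).factorial : ℝ) / r ^ m := by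
  have h1 : ∀ x ∈ Set.Ioi (0:ℝ),
      x ^ (m - 1 : ℕ) * Real.exp (-(r * x)) = x ^ ((m:ℝ) - 1) * Real.exp (-(r * x)) := by
    intro x hx
    rw [show ((m:ℝ) - 1) = ((m - 1 : ℕ) : ℝ) by
      rw [Nat.cast_sub hm, Nat.cast_one], Real.rpow_natCast]
  rw [setIntegral_congr_fun measurableSet_Ioi h1,
    integral_rpow_mul_exp_neg_mul_Ioi (by exact_mod_cast hm) hr]
  have h2 : Real.Gamma (m : ℝ) = ((m-1).factorial : ℝ) := by
    rw [show (m : ℝ) = ((m - 1 : ℕ) : ℝ) + 1 by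
      rw [Nat.cast_sub hm, Nat.cast_one]; ring]
    exact Real.Gamma_nat_eq_factorial _
  rw [h2, Real.rpow_natCast, div_pow, one_pow]
  ring

lemma rho_moment {τ c : ℝ} (hτ : 0 < τ) (hc : 0 < c) (m : ℕ) (hm : 1 ≤ m) :
    ∫⁻ γ, expNeg (ENNReal.ofReal γ) * (ENNReal.ofReal γ) ^ m ∂(gammaLevyIntensity τ c)
      = ENNReal.ofReal (τ * ((m-1).factorial : ℝ) / (c+1) ^ m) := by
  have hgmeas : Measurable fun γ : ℝ => expNeg (ENNReal.ofReal γ) * ENNReal.ofReal γ ^ m :=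
    (measurable_expNeg.comp ENNReal.measurable_ofReal).mul
      (ENNReal.measurable_ofReal.pow_const m)
  rw [gammaLevyIntensity, lintegral_withDensity_eq_lintegral_mul _ (measurable_density τ c)
    hgmeas]
  simp only [Pi.mul_apply]
  have hcongr : ∀ᵐ γ ∂(volume : Measure ℝ), γ ∈ Set.Ioi (0:ℝ) →
      ENNReal.ofReal (τ * γ⁻¹ * Real.exp (-(c * γ))) *
        (expNeg (ENNReal.ofReal γ) * ENNReal.ofReal γ ^ m)
        = ENNReal.ofReal (τ * (γ ^ (m-1) * Real.exp (-((c+1) * γ)))) := by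
    refine Filter.Eventually.of_forall  fun γ hγ => ?_
    have hγ0 : (0:ℝ) < γ := hγ
    rw [expNeg_ofReal hγ0.le, ← ENNReal.ofReal_pow hγ0.le,
      ← ENNReal.ofReal_mul (Real.exp_nonneg _), ← ENNReal.ofReal_mul (by positivity)]
    congr 1
    have hpow : γ ^ m = γ * γ ^ (m - 1) := by
      conv_lhs => rw [show m = (m-1)+1 from (Nat.succ_pred_eq_of_pos hm).symm]
      rw [pow_succ]
      ring
    rw [hpow, show (-((c+1)*γ)) = (-(c*γ)) + (-γ) by ring, Real.exp_add]
    field_simp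
  calc ∫⁻ γ in Set.Ioi (0:ℝ), ENNReal.ofReal (τ * γ⁻¹ * Real.exp (-(c * γ))) *
        (expNeg (ENNReal.ofReal γ) * ENNReal.ofReal γ ^ m)
      = ∫⁻ γ in Set.Ioi (0:ℝ), ENNReal.ofReal (τ * (γ ^ (m-1) * Real.exp (-((c+1) * γ)))) := by
        exact setLIntegral_congr_fun_ae measurableSet_Ioi hcongr
    _ = ENNReal.ofReal (∫ γ in Set.Ioi (0:ℝ), τ * (γ ^ (m-1) * Real.exp (-((c+1) * γ)))) := by
        rw [← ofReal_integral_eq_lintegral_ofReal]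
        · exact ((integrableOn_pow_mul_exp (m-1) (by linarith)).const_mul τ)
        · filter_upwards [ae_restrict_mem measurableSet_Ioi] with γ hγ
          have : (0:ℝ) < γ := hγ
          positivity
    _ = ENNReal.ofReal (τ * ((m-1).factorial : ℝ) / (c+1) ^ m) := by
        rw [integral_const_mul, integral_pow_mul_exp m hm (by linarith)]
        congr 1
        ring

lemma interval_exp_integral {γ : ℝ} (hγ : 0 < γ) (a b : ℝ) :
    ∫ t in a..b, Real.exp (-(t * γ)) = γ⁻¹ * (Real.exp (-(a*γ)) - Real.exp (-(b*γ))) := by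
  have h1 : (fun t : ℝ => Real.exp (-(t * γ))) = fun t => Real.exp ((-γ) * t) := by
    funext t; ring_nf
  rw [h1, intervalIntegral.integral_comp_mul_left (fun x => Real.exp x)
    (by simpa using hγ.ne' : (-γ : ℝ) ≠ 0), integral_exp, smul_eq_mul,
    show -γ * b = -(b*γ) by ring, show -γ * a = -(a*γ) by ring, inv_neg]
  ring

lemma integrableOn_Ioc_of_continuous {f : ℝ → ℝ} (a b : ℝ) (hf : ContinuousOn f (Set.Icc a b)) :
    IntegrableOn f (Set.Ioc a b) :=
  (hf.integrableOn_compact isCompact_Icc).mono_set Set.Ioc_subset_Icc_self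

lemma rho_frullani {τ c : ℝ} (hτ : 0 < τ) (hc : 0 < c) :
    ∫⁻ γ, (1 - expNeg (ENNReal.ofReal γ)) ∂(gammaLevyIntensity τ c)
      = ENNReal.ofReal (τ * Real.log ((c+1)/c)) := by
  have hgmeas : Measurable fun γ : ℝ => 1 - expNeg (ENNReal.ofReal γ) :=
    measurable_const.sub (measurable_expNeg.comp ENNReal.measurable_ofReal)
  rw [gammaLevyIntensity,
    lintegral_withDensity_eq_lintegral_mul _ (measurable_density τ c) hgmeas]
  simp only [Pi.mul_apply]
  have hstep1 : ∀ᵐ γ ∂(volume : Measure ℝ), γ ∈ Set.Ioi (0:ℝ) →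
      ENNReal.ofReal (τ * γ⁻¹ * Real.exp (-(c * γ))) * (1 - expNeg (ENNReal.ofReal γ))
        = ∫⁻ t in Set.Ioc c (c+1), ENNReal.ofReal (τ * Real.exp (-(t * γ))) := by
    refine Filter.Eventually.of_forall fun γ hγ => ?_
    have hγ0 : (0:ℝ) < γ := hγ
    rw [one_sub_expNeg_ofReal hγ0.le, ← ENNReal.ofReal_mul (by positivity)]
    have hreal : ∫ t in Set.Ioc c (c+1), τ * Real.exp (-(t * γ))
        = τ * γ⁻¹ * Real.exp (-(c * γ)) * (1 - Real.exp (-γ)) := by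
      rw [← intervalIntegral.integral_of_le (by linarith : c ≤ c+1),
        intervalIntegral.integral_const_mul, interval_exp_integral hγ0,
        show -((c+1)*γ) = -(c*γ) + (-γ) by ring, Real.exp_add]
      ring
    rw [← hreal, ofReal_integral_eq_lintegral_ofReal]
    · exact integrableOn_Ioc_of_continuous _ _
        (continuous_const.mul (Real.continuous_exp.comp
          ((continuous_id.mul continuous_const).neg))).continuousOn
    · filter_upwards [ae_restrict_mem measurableSet_Ioc] with t _
      positivity
  rw [setLIntegral_congr_fun_ae measurableSet_Ioi hstep1]
  have hswap : ∫⁻ γ in Set.Ioi (0:ℝ), ∫⁻ t in Set.Ioc c (c+1),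
        ENNReal.ofReal (τ * Real.exp (-(t * γ)))
      = ∫⁻ t in Set.Ioc c (c+1), ∫⁻ γ in Set.Ioi (0:ℝ),
        ENNReal.ofReal (τ * Real.exp (-(t * γ))) := by
    apply lintegral_lintegral_swap
    apply Measurable.aemeasurable
    exact ENNReal.measurable_ofReal.comp
      (measurable_const.mul
        (Real.continuous_exp.measurable.comp ((measurable_snd.mul measurable_fst).neg)))
  rw [hswap]
  have hstep2 : ∀ᵐ t ∂(volume : Measure ℝ), t ∈ Set.Ioc c (c+1) →
      (∫⁻ γ in Set.Ioi (0:ℝ), ENNReal.ofReal (τ * Real.exp (-(t * γ))))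
        = ENNReal.ofReal (τ * t⁻¹) := by
    refine Filter.Eventually.of_forall fun t ht => ?_
    have ht0 : (0:ℝ) < t := lt_trans hc ht.1
    have hint : IntegrableOn (fun γ : ℝ => Real.exp (-(t * γ))) (Set.Ioi (0:ℝ)) := by
      simpa [neg_mul] using exp_neg_integrableOn_Ioi 0 ht0
    have hreal : ∫ γ in Set.Ioi (0:ℝ), τ * Real.exp (-(t * γ)) = τ * t⁻¹ := by
      rw [integral_const_mul]
      have h1 := integral_pow_mul_exp 1 le_rfl ht0
      simp only [pow_zero, one_mul, Nat.sub_self, Nat.factorial_zero, Nat.cast_one,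
        pow_one] at h1
      rw [h1, one_div]
    rw [← hreal, ofReal_integral_eq_lintegral_ofReal (hint.const_mul τ)]
    filter_upwards [ae_restrict_mem measurableSet_Ioi] with γ _
    positivity
  rw [setLIntegral_congr_fun_ae measurableSet_Ioc hstep2]
  have hreal3 : ∫ t in Set.Ioc c (c+1), τ * t⁻¹ = τ * Real.log ((c+1)/c) := by
    rw [← intervalIntegral.integral_of_le (by linarith : c ≤ c+1),
      intervalIntegral.integral_const_mul, integral_inv_of_pos hc (by linarith)]
  rw [← hreal3, ofReal_integral_eq_lintegral_ofReal]
  · refine integrableOn_Ioc_of_continuous _ _ (continuousOn_const.mul ?_)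
    exact ContinuousOn.inv₀ continuousOn_id fun x hx => ne_of_gt (lt_of_lt_of_le hc hx.1)
  · filter_upwards [ae_restrict_mem measurableSet_Ioc] with t ht
    have ht0 : (0:ℝ) < t := lt_trans hc ht.1
    positivity


lemma lintegral_prod_snd {X : Type*} [MeasurableSpace X] (G₀ : Measure X)
    [IsProbabilityMeasure G₀] (ρ : Measure ℝ) [SFinite ρ] (g : ℝ → ENNReal)
    (hg : Measurable g) :
    ∫⁻ z : X × ℝ, g z.2 ∂(G₀.prod ρ) = ∫⁻ γ, g γ ∂ρ := by
  rw [MeasureTheory.lintegral_prod (fun z => g z.2) (hg.comp measurable_snd).aemeasurable]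
  simp [lintegral_const]

lemma Gamma_add_nat {τ : ℝ} (hτ : 0 < τ) (k : ℕ) :
    Real.Gamma (τ + k) = Real.Gamma τ * ∏ i ∈ Finset.range k, (τ + i) := by
  induction k with
  | zero => simp
  | succ n ih =>
      have h1 : τ + ((n+1 : ℕ) : ℝ) = (τ + n) + 1 := by push_cast; ring
      have h2 : (0:ℝ) < τ + n := by positivity
      rw [h1, Real.Gamma_add_one h2.ne', ih, Finset.prod_range_succ]
      ring

lemma ofReal_range_prod {τ : ℝ} (hτ : 0 ≤ τ) (k : ℕ) :
    ∏ i ∈ Finset.range k, (ENNReal.ofReal τ + (i : ENNReal))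
      = ENNReal.ofReal (∏ i ∈ Finset.range k, (τ + i)) := by
  induction k with
  | zero => simp
  | succ n ih =>
      rw [Finset.prod_range_succ, Finset.prod_range_succ, ih,
        show ((n : ENNReal)) = ENNReal.ofReal (n : ℝ) by rw [ENNReal.ofReal_natCast],
        ← ENNReal.ofReal_add hτ (by positivity),
        ← ENNReal.ofReal_mul (Finset.prod_nonneg fun i _ => by positivity)]

lemma blockWt_def (t : ENNReal) (J : Finset α) :
    blockWt t J = t * ((J.card - 1).factorial : ENNReal) := rfl

lemma ofReal_split {τ c : ℝ} (hτ : 0 < τ) (hc : 0 < c) (m : ℕ) :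
    ENNReal.ofReal (τ * ((m-1).factorial : ℝ) / (c+1) ^ m)
      = (ENNReal.ofReal τ * (((m-1).factorial : ℕ) : ENNReal))
          * ((ENNReal.ofReal (c+1))⁻¹) ^ m := by
  have hc1 : (0:ℝ) < c + 1 := by linarith
  have h1 : τ * ((m-1).factorial : ℝ) / (c+1)^m
      = (τ * ((m-1).factorial:ℝ)) * (((c+1)⁻¹)^m) := by
    rw [inv_pow]; ring
  rw [h1, ENNReal.ofReal_mul (by positivity), ENNReal.ofReal_mul hτ.le,
    ENNReal.ofReal_natCast, ENNReal.ofReal_pow (by positivity),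
    ENNReal.ofReal_inv_of_pos hc1]

lemma final_eq {τ c : ℝ} (hτ : 0 < τ) (hc : 0 < c) (k : ℕ) :
    expNeg (ENNReal.ofReal (τ * Real.log ((c+1)/c)))
      * (ENNReal.ofReal (∏ i ∈ Finset.range k, (τ + i)) * ((ENNReal.ofReal (c+1))⁻¹) ^ k)
      * ((k.factorial : ENNReal))⁻¹
    = ENNReal.ofReal (Real.Gamma (τ + k) / (k.factorial * Real.Gamma τ)
        * (c / (c + 1)) ^ τ * ((c + 1) ^ k)⁻¹) := by
  have hc1 : (0:ℝ) < c + 1 := by linarith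
  have hlog : 0 ≤ τ * Real.log ((c+1)/c) := by
    apply mul_nonneg hτ.le
    apply Real.log_nonneg
    rw [le_div_iff₀ hc]; linarith
  have hprodnn : 0 ≤ ∏ i ∈ Finset.range k, (τ + i) :=
    Finset.prod_nonneg fun i _ => by positivity
  rw [expNeg_ofReal hlog]
  have hexp : Real.exp (-(τ * Real.log ((c+1)/c))) = (c/(c+1)) ^ τ := by
    rw [Real.rpow_def_of_pos (by positivity : (0:ℝ) < c/(c+1))]
    congr 1
    rw [show c/(c+1) = ((c+1)/c)⁻¹ by rw [inv_div], Real.log_inv]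
    ring
  rw [hexp,
    show (ENNReal.ofReal (c+1))⁻¹ = ENNReal.ofReal ((c+1)⁻¹) from
      (ENNReal.ofReal_inv_of_pos hc1).symm,
    ← ENNReal.ofReal_pow (by positivity),
    show ((k.factorial : ENNReal))⁻¹ = ENNReal.ofReal (((k.factorial : ℝ))⁻¹) by
      rw [ENNReal.ofReal_inv_of_pos (by positivity), ENNReal.ofReal_natCast],
    ← ENNReal.ofReal_mul hprodnn,
    ← ENNReal.ofReal_mul (by positivity),
    ← ENNReal.ofReal_mul (by positivity)]
  congr 1
  rw [Gamma_add_nat hτ k]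
  have h1 : Real.Gamma τ ≠ 0 := (Real.Gamma_pos_of_pos hτ).ne'
  have h2 : (k.factorial : ℝ) ≠ 0 := by positivity
  have h3 : (c+1) ^ k ≠ 0 := by positivity
  field_simp
  ring_nf
  rw [← mul_pow, inv_mul_cancel₀ (ne_of_gt (by linarith)), one_pow]

end SNCPAux

/-- the number of points of a Thomas-gamma shot-noise Cox process
is negative binomial.  With `ν = G₀ ⊗ ρ` and `ρ(dγ) = τ γ⁻¹ e^{−cγ} dγ` the Lévy
intensity of the gamma process, `Φ(X)` is negative binomial with parameters
`(τ, c/(c+1))`: `P(Φ(X)=k) = Γ(τ+k)/(k! Γ(τ)) · (c/(c+1))^τ · (c+1)^{−k}`. -/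
theorem sncp_gamma_number_of_points_negative_binomial
    {Ω X : Type*} [MeasurableSpace Ω] [MeasurableSpace X]
    (P : Measure Ω) [IsProbabilityMeasure P]
    (μ : Measure X) [SigmaFinite μ]
    (G₀ : Measure X) [IsProbabilityMeasure G₀]
    (τ c : ℝ) (hτ : 0 < τ) (hc : 0 < c)
    (κ : X → X → ENNReal) (hκ : Measurable (Function.uncurry κ))
    (hκ1 : ∀ θ : X, ∫⁻ y, κ y θ ∂μ = 1)
    (Λ : Ω → Measure (X × ℝ)) (hΛmeas : Measurable Λ)
    -- Poisson Laplace functional of `Λ`, with intensity `ν = G₀ ⊗ ρ`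
    (hΛ : ∀ h : X × ℝ → ENNReal, Measurable h →
      ∫⁻ ω, expNeg (∫⁻ z, h z ∂(Λ ω)) ∂P
        = expNeg (∫⁻ z, (1 - expNeg (h z)) ∂(G₀.prod (gammaLevyIntensity τ c))))
    (Φ : Ω → Measure X) (hΦmeas : Measurable Φ)
    -- `Φ` is conditionally Poisson given `Λ`
    (hcond : ∀ f : X → ENNReal, Measurable f →
      ∀ G : Measure (X × ℝ) → ENNReal, Measurable G →
      ∫⁻ ω, expNeg (∫⁻ y, f y ∂(Φ ω)) * G (Λ ω) ∂P
        = ∫⁻ ω, expNeg (∫⁻ y, (1 - expNeg (f y))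
            * (∫⁻ z, ENNReal.ofReal z.2 * κ y z.1 ∂(Λ ω)) ∂μ) * G (Λ ω) ∂P)
    -- (a) conditionally on `Λ`, the number of points is Poisson with mean `Λ(γ̂)`
    (ha : ∀ k : ℕ, ∀ G : Measure (X × ℝ) → ENNReal, Measurable G →
      ∫⁻ ω, (if Φ ω Set.univ = (k : ENNReal) then 1 else 0) * G (Λ ω) ∂P
        = ∫⁻ ω, expNeg (∫⁻ z, ENNReal.ofReal z.2 ∂(Λ ω))
            * (∫⁻ z, ENNReal.ofReal z.2 ∂(Λ ω)) ^ k / (Nat.factorial k : ENNReal)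
            * G (Λ ω) ∂P)
    -- (b) Poisson exponential-moment formula for `Λ` with intensity `ν = G₀ ⊗ ρ`
    (hb : PoissonExpMoment P Λ (G₀.prod (gammaLevyIntensity τ c))) :
    ∀ k : ℕ,
      P {ω | Φ ω Set.univ = (k : ENNReal)}
        = ENNReal.ofReal
            (Real.Gamma (τ + k) / (Nat.factorial k * Real.Gamma τ)
              * (c / (c + 1)) ^ τ * ((c + 1) ^ k)⁻¹) := by
  intro k
  classical
  set ρ := gammaLevyIntensity τ c with hρdef
  haveI : SFinite ρ := by
    rw [hρdef, gammaLevyIntensity]; infer_instance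
  have hmeas_h : Measurable fun z : X × ℝ => ENNReal.ofReal z.2 :=
    ENNReal.measurable_ofReal.comp measurable_snd
  have hmeasφ : Measurable fun ω => Φ ω Set.univ :=
    (Measure.measurable_coe MeasurableSet.univ).comp hΦmeas
  have hS : MeasurableSet {ω | Φ ω Set.univ = (k : ENNReal)} :=
    hmeasφ (measurableSet_singleton _)
  have hA : P {ω | Φ ω Set.univ = (k : ENNReal)}
      = ∫⁻ ω, (if Φ ω Set.univ = (k : ENNReal) then 1 else 0) ∂P := by
    rw [← lintegral_indicator_one hS]
    refine lintegral_congr fun ω => ?_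
    by_cases h : Φ ω Set.univ = (k : ENNReal) <;>
      simp [Set.indicator_apply, Set.mem_setOf_eq, h]
  have hB := ha k (fun _ => 1) measurable_const
  simp only [mul_one] at hB
  rw [hA, hB]
  have hC : ∫⁻ ω, expNeg (∫⁻ z, ENNReal.ofReal z.2 ∂(Λ ω))
        * (∫⁻ z, ENNReal.ofReal z.2 ∂(Λ ω)) ^ k / (k.factorial : ENNReal) ∂P
      = (∫⁻ ω, expNeg (∫⁻ z, ENNReal.ofReal z.2 ∂(Λ ω))
        * (∫⁻ z, ENNReal.ofReal z.2 ∂(Λ ω)) ^ k ∂P) * ((k.factorial : ENNReal))⁻¹ := by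
    simp_rw [div_eq_mul_inv]
    exact lintegral_mul_const' _ _
      (by simp [ENNReal.inv_ne_top, Nat.factorial_ne_zero])
  rw [hC]
  have hfr : ∫⁻ z : X × ℝ, (1 - expNeg (ENNReal.ofReal z.2)) ∂(G₀.prod ρ)
      = ENNReal.ofReal (τ * Real.log ((c+1)/c)) := by
    rw [SNCPAux.lintegral_prod_snd G₀ ρ (fun γ => 1 - expNeg (ENNReal.ofReal γ))
      (measurable_const.sub (SNCPAux.measurable_expNeg.comp ENNReal.measurable_ofReal))]
    exact SNCPAux.rho_frullani hτ hc
  rcases Nat.eq_zero_or_pos k with hk0 | hkpos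
  · subst hk0
    have hM : ∫⁻ ω, expNeg (∫⁻ z, ENNReal.ofReal z.2 ∂(Λ ω))
          * (∫⁻ z, ENNReal.ofReal z.2 ∂(Λ ω)) ^ 0 ∂P
        = expNeg (ENNReal.ofReal (τ * Real.log ((c+1)/c))) := by
      simp only [pow_zero, mul_one]
      rw [hΛ _ hmeas_h, hfr]
    rw [hM]
    have := SNCPAux.final_eq hτ hc 0
    simpa using this
  · have hbk := hb k hkpos (fun z => ENNReal.ofReal z.2) hmeas_h
      (fun _ => fun z => ENNReal.ofReal z.2) (fun _ => hmeas_h)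
    set T := ENNReal.ofReal τ with hTdef
    set r := (ENNReal.ofReal (c+1))⁻¹ with hrdef
    have hJint : ∀ pt : Finpartition (Finset.univ : Finset (Fin k)), ∀ J ∈ pt.parts,
        (∫⁻ z : X × ℝ, expNeg (ENNReal.ofReal z.2)
            * ∏ _j ∈ J, ENNReal.ofReal z.2 ∂(G₀.prod ρ))
          = SNCPAux.blockWt T J * r ^ J.card := by
      intro pt J hJ
      have hm : 1 ≤ J.card := Finset.card_pos.2 (pt.nonempty_of_mem_parts hJ)
      have e1 : ∀ z : X × ℝ, (∏ _j ∈ J, ENNReal.ofReal z.2)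
          = (ENNReal.ofReal z.2) ^ J.card := fun z => Finset.prod_const _
      calc (∫⁻ z : X × ℝ, expNeg (ENNReal.ofReal z.2)
              * ∏ _j ∈ J, ENNReal.ofReal z.2 ∂(G₀.prod ρ))
          = ∫⁻ z : X × ℝ, expNeg (ENNReal.ofReal z.2)
              * (ENNReal.ofReal z.2) ^ J.card ∂(G₀.prod ρ) := by
            exact lintegral_congr fun z => by rw [e1]
        _ = ∫⁻ γ, expNeg (ENNReal.ofReal γ) * (ENNReal.ofReal γ) ^ J.card ∂ρ := by
            exact SNCPAux.lintegral_prod_snd G₀ ρ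
              (fun γ => expNeg (ENNReal.ofReal γ) * (ENNReal.ofReal γ) ^ J.card)
              ((SNCPAux.measurable_expNeg.comp ENNReal.measurable_ofReal).mul
                (ENNReal.measurable_ofReal.pow_const _))
        _ = ENNReal.ofReal (τ * ((J.card-1).factorial : ℝ) / (c+1) ^ J.card) :=
            SNCPAux.rho_moment hτ hc _ hm
        _ = SNCPAux.blockWt T J * r ^ J.card := by
            rw [SNCPAux.blockWt_def]
            exact SNCPAux.ofReal_split hτ hc J.card
    have hM : ∫⁻ ω, expNeg (∫⁻ z, ENNReal.ofReal z.2 ∂(Λ ω))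
          * (∫⁻ z, ENNReal.ofReal z.2 ∂(Λ ω)) ^ k ∂P
        = expNeg (ENNReal.ofReal (τ * Real.log ((c+1)/c)))
            * (ENNReal.ofReal (∏ i ∈ Finset.range k, (τ + i)) * r ^ k) := by
      have e1 : ∫⁻ ω, expNeg (∫⁻ z, ENNReal.ofReal z.2 ∂(Λ ω))
            * (∫⁻ z, ENNReal.ofReal z.2 ∂(Λ ω)) ^ k ∂P
          = ∫⁻ ω, expNeg (∫⁻ z, ENNReal.ofReal z.2 ∂(Λ ω))
            * ∏ _j : Fin k, ∫⁻ z, ENNReal.ofReal z.2 ∂(Λ ω) ∂P :=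
        lintegral_congr fun ω => by
          rw [Finset.prod_const, Finset.card_univ, Fintype.card_fin]
      rw [e1, hbk, hfr]
      congr 1
      calc ∑ pt : Finpartition (Finset.univ : Finset (Fin k)),
            ∏ J ∈ pt.parts, ∫⁻ z : X × ℝ, expNeg (ENNReal.ofReal z.2)
              * ∏ _j ∈ J, ENNReal.ofReal z.2 ∂(G₀.prod ρ)
          = ∑ pt : Finpartition (Finset.univ : Finset (Fin k)),
              (∏ J ∈ pt.parts, SNCPAux.blockWt T J) * r ^ k := by
            refine Finset.sum_congr rfl fun pt _ => ?_
            rw [Finset.prod_congr rfl (fun J hJ => hJint pt J hJ),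
              Finset.prod_mul_distrib, Finset.prod_pow_eq_pow_sum,
              pt.sum_card_parts, Finset.card_univ, Fintype.card_fin]
        _ = (∑ pt : Finpartition (Finset.univ : Finset (Fin k)),
              ∏ J ∈ pt.parts, SNCPAux.blockWt T J) * r ^ k := by
            rw [Finset.sum_mul]
        _ = (∏ i ∈ Finset.range k, (T + i)) * r ^ k := by
            rw [SNCPAux.partition_sum T (Finset.univ : Finset (Fin k)),
              Finset.card_univ, Fintype.card_fin]
        _ = ENNReal.ofReal (∏ i ∈ Finset.range k, (τ + i)) * r ^ k := by
            rw [SNCPAux.ofReal_range_prod hτ.le]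
    rw [hM]
    exact SNCPAux.final_eq hτ hc k
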